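/- For every k ≥ 1 and every x in (-1,1), the Cauchy principal value integral (1/π) P.V. ∫_{-1}^{1} T_k'(y) √(1-y²) / (x - y) dy equals k · T_k(x). -/

import Mathlib

open Polynomial Filter

open Real Set

lemma alg_key (x y s u : ℝ) (hu2 : u ^ 2 = 1 - y ^ 2) (hs2 : s ^ 2 = 1 - x ^ 2)
    (hupos : 0 < u) (hspos : 0 < s) (hN : 0 < 1 - x * y + s * u) (hxy : x - y ≠ 0) :
    x * (1 / u) - -y / u + s * ((-x + s * (-y / u)) / (1 - x * y + s * u)) - s * (-1 / (x - y))
      = u / (x - y) := by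
  have key : (x + y) * (1 - x * y + s * u) = (x * u + s * y) * (s + u) := by
    linear_combination (-x) * hu2 + (-y) * hs2
  have key2 : ((s - u) * (1 - x * y + s * u)) * (s + u) = (-(x - y) * (x * u + s * y)) * (s + u) := by
    linear_combination (1 - x*y + s*u) * hs2 - (1 - x*y+s*u) * hu2 + (y - x) * key
  have key3 : (s - u) * (1 - x * y + s * u) = -(x - y) * (x * u + s * y) :=
    mul_right_cancel₀ (by positivity) key2
  have main : ((x + y) * (1 - x * y + s * u) - s * (x * u + s * y)) * (x - y)
      = (u - s) * u * (1 - x * y + s * u) := by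
    linear_combination (x - y) * key + u * key3
  have hNne := ne_of_gt hN
  have hune := ne_of_gt hupos
  have final : (x + y) / u - s * (x * u + s * y) / (u * (1 - x * y + s * u)) = (u - s) / (x - y) := by
    rw [div_sub_div _ _ hune (by positivity), div_eq_div_iff (by positivity) hxy]
    linear_combination u * main
  have step : x * (1 / u) - -y / u + s * ((-x + s * (-y / u)) / (1 - x * y + s * u)) - s * (-1 / (x - y))
      = ((x + y) / u - s * (x * u + s * y) / (u * (1 - x * y + s * u))) + s / (x - y) := by
    field_simp
    ring
  rw [step, final, ← add_div]
  ring_nf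

lemma sqrt_deriv {y : ℝ} (h1 : -1 < y) (h2 : y < 1) :
    HasDerivAt (fun y : ℝ => Real.sqrt (1 - y ^ 2)) (-y / Real.sqrt (1 - y ^ 2)) y := by
  have hpos : 0 < 1 - y ^ 2 := by nlinarith
  have h := (Real.hasDerivAt_sqrt (ne_of_gt hpos)).comp y
    (((hasDerivAt_id y).pow 2).const_sub 1)
  refine h.congr_deriv ?_
  have hs : Real.sqrt (1 - y ^ 2) ≠ 0 := by positivity
  field_simp
  rw [id_eq]
  norm_num

lemma N_pos {x y : ℝ} (hx1 : -1 < x) (hx2 : x < 1) (h1 : -1 ≤ y) (h2 : y ≤ 1) :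
    0 < 1 - x * y + Real.sqrt (1 - x ^ 2) * Real.sqrt (1 - y ^ 2) := by
  have h3 : x * y < 1 := by nlinarith [sq_nonneg (x - y), mul_pos (sub_pos.mpr hx2) (show (0:ℝ) < x + 1 by linarith), mul_nonneg (sub_nonneg.mpr h2) (show (0:ℝ) ≤ y + 1 by linarith)]
  exact add_pos_of_pos_of_nonneg (by linarith) (mul_nonneg (Real.sqrt_nonneg _) (Real.sqrt_nonneg _))

lemma F_deriv {x y : ℝ} (hx1 : -1 < x) (hx2 : x < 1) (h1 : -1 < y) (h2 : y < 1)
    (hxy : x ≠ y) :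
    HasDerivAt (fun y : ℝ => x * Real.arcsin y - Real.sqrt (1 - y ^ 2)
      + Real.sqrt (1 - x ^ 2) * Real.log (1 - x * y + Real.sqrt (1 - x ^ 2) * Real.sqrt (1 - y ^ 2))
      - Real.sqrt (1 - x ^ 2) * Real.log (x - y))
      (Real.sqrt (1 - y ^ 2) / (x - y)) y := by
  have hupos : 0 < Real.sqrt (1 - y ^ 2) := Real.sqrt_pos.mpr (by nlinarith)
  have hspos : 0 < Real.sqrt (1 - x ^ 2) := Real.sqrt_pos.mpr (by nlinarith)
  have hu2 : Real.sqrt (1 - y ^ 2) ^ 2 = 1 - y ^ 2 := Real.sq_sqrt (by nlinarith)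
  have hs2 : Real.sqrt (1 - x ^ 2) ^ 2 = 1 - x ^ 2 := Real.sq_sqrt (by nlinarith)
  have hNpos := N_pos hx1 hx2 h1.le h2.le
  have hxyne : x - y ≠ 0 := sub_ne_zero.mpr hxy
  have hA : HasDerivAt (fun y : ℝ => x * Real.arcsin y) (x * (1 / Real.sqrt (1 - y ^ 2))) y :=
    (Real.hasDerivAt_arcsin (by linarith) (by linarith)).const_mul x
  have hB := sqrt_deriv h1 h2
  have hN : HasDerivAt (fun y : ℝ => 1 - x * y + Real.sqrt (1 - x ^ 2) * Real.sqrt (1 - y ^ 2))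
      (-x + Real.sqrt (1 - x ^ 2) * (-y / Real.sqrt (1 - y ^ 2))) y := by
    have h0 : HasDerivAt (fun y : ℝ => 1 - x * y) (-x) y := by
      simpa using ((hasDerivAt_id y).const_mul x).const_sub 1
    exact h0.add ((sqrt_deriv h1 h2).const_mul _)
  have hL1 := (hN.log (ne_of_gt hNpos)).const_mul (Real.sqrt (1 - x ^ 2))
  have hL2 : HasDerivAt (fun y : ℝ => Real.sqrt (1 - x ^ 2) * Real.log (x - y))
      (Real.sqrt (1 - x ^ 2) * (-1 / (x - y))) y := by
    have hd : HasDerivAt (fun y : ℝ => x - y) (-1) y := by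
      simpa using (hasDerivAt_id y).const_sub x
    exact (hd.log hxyne).const_mul _
  have htot := ((hA.sub hB).add hL1).sub hL2
  refine htot.congr_deriv ?_
  calc x * (1 / Real.sqrt (1 - y ^ 2)) - -y / Real.sqrt (1 - y ^ 2)
      + Real.sqrt (1 - x ^ 2) * ((-x + Real.sqrt (1 - x ^ 2) * (-y / Real.sqrt (1 - y ^ 2))) /
        (1 - x * y + Real.sqrt (1 - x ^ 2) * Real.sqrt (1 - y ^ 2)))
      - Real.sqrt (1 - x ^ 2) * (-1 / (x - y))
      = Real.sqrt (1 - y ^ 2) / (x - y) :=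
    alg_key x y _ _ hu2 hs2 hupos hspos hNpos hxyne

lemma cont_sqrt1 : Continuous (fun y : ℝ => Real.sqrt (1 - y ^ 2)) :=
  Real.continuous_sqrt.comp (by continuity)

lemma cont_div {x : ℝ} {g : ℝ → ℝ} (hg : Continuous g) {S : Set ℝ} (hS : ∀ y ∈ S, x ≠ y) :
    ContinuousOn (fun y => g y / (x - y)) S :=
  hg.continuousOn.div ((continuous_const.sub continuous_id).continuousOn)
    (fun y hy => sub_ne_zero.mpr (hS y hy))

lemma base_tendsto {x : ℝ} (hx1 : -1 < x) (hx2 : x < 1) :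
    Tendsto (fun ε : ℝ =>
      (∫ y in (-1:ℝ)..(x - ε), Real.sqrt (1 - y ^ 2) / (x - y)) +
      ∫ y in (x + ε)..(1:ℝ), Real.sqrt (1 - y ^ 2) / (x - y))
      (nhdsWithin 0 (Set.Ioi 0)) (nhds (Real.pi * x)) := by
  set s := Real.sqrt (1 - x ^ 2) with hs
  set H : ℝ → ℝ := fun t => x * Real.arcsin t - Real.sqrt (1 - t ^ 2)
      + s * Real.log (1 - x * t + s * Real.sqrt (1 - t ^ 2)) with hH
  set F : ℝ → ℝ := fun t => H t - s * Real.log (x - t) with hF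
  have hFcont : ∀ S : Set ℝ, S ⊆ Set.Icc (-1) 1 → (∀ y ∈ S, x ≠ y) → ContinuousOn F S := by
    intro S hsub hne
    apply ContinuousOn.sub
    · apply ContinuousOn.add
      · exact ((continuous_const.mul Real.continuous_arcsin).sub cont_sqrt1).continuousOn
      · apply ContinuousOn.mul continuousOn_const
        apply ContinuousOn.log
        · exact ((continuous_const.sub (continuous_const.mul continuous_id)).add
            (continuous_const.mul cont_sqrt1)).continuousOn
        · intro y hy
          exact ne_of_gt (N_pos hx1 hx2 (hsub hy).1 (hsub hy).2)
    · apply ContinuousOn.mul continuousOn_const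
      apply ContinuousOn.log ((continuous_const.sub continuous_id).continuousOn)
      intro y hy
      exact sub_ne_zero.mpr (hne y hy)
  have hFderiv : ∀ y ∈ Set.Ioo (-1 : ℝ) 1, x ≠ y →
      HasDerivAt F (Real.sqrt (1 - y ^ 2) / (x - y)) y := by
    intro y hy hne
    have := F_deriv hx1 hx2 hy.1 hy.2 hne
    simpa [hF, hH, hs, sub_add_eq_sub_sub, add_sub_assoc] using this
  have hev : ∀ᶠ ε in nhdsWithin (0:ℝ) (Set.Ioi 0),
      ((∫ y in (-1:ℝ)..(x - ε), Real.sqrt (1 - y ^ 2) / (x - y)) +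
        ∫ y in (x + ε)..(1:ℝ), Real.sqrt (1 - y ^ 2) / (x - y))
      = Real.pi * x + (H (x - ε) - H (x + ε)) := by
    have hmem : Set.Ioo (0:ℝ) (min (x + 1) (1 - x)) ∈ nhdsWithin (0:ℝ) (Set.Ioi 0) := by
      apply mem_nhdsWithin.mpr
      exact ⟨Set.Iio (min (x + 1) (1 - x)), isOpen_Iio, by simp; constructor <;> linarith,
        fun y hy => ⟨hy.2, hy.1⟩⟩
    filter_upwards [hmem] with ε hε
    obtain ⟨hε0, hεlt⟩ := hε
    have hε1 : ε < x + 1 := lt_of_lt_of_le hεlt (min_le_left _ _)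
    have hε2 : ε < 1 - x := lt_of_lt_of_le hεlt (min_le_right _ _)
    have eq1 : (∫ y in (-1:ℝ)..(x - ε), Real.sqrt (1 - y ^ 2) / (x - y)) = F (x - ε) - F (-1) := by
      apply intervalIntegral.integral_eq_sub_of_hasDerivAt_of_le (by linarith)
      · exact hFcont _ (fun y hy => ⟨hy.1, by linarith [hy.2]⟩) (fun y hy => by
          have := hy.2; intro h; subst h; linarith)
      · intro y hy
        exact hFderiv y ⟨hy.1, by linarith [hy.2]⟩ (fun h => by rw [← h] at hy; linarith [hy.2])
      · apply ContinuousOn.intervalIntegrable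
        rw [Set.uIcc_of_le (by linarith)]
        exact cont_div cont_sqrt1 (fun y hy => fun h => by rw [← h] at hy; linarith [hy.2])
    have eq2 : (∫ y in (x + ε)..(1:ℝ), Real.sqrt (1 - y ^ 2) / (x - y)) = F 1 - F (x + ε) := by
      apply intervalIntegral.integral_eq_sub_of_hasDerivAt_of_le (by linarith)
      · exact hFcont _ (fun y hy => ⟨by linarith [hy.1], hy.2⟩) (fun y hy => by
          have := hy.1; intro h; subst h; linarith)
      · intro y hy
        exact hFderiv y ⟨by linarith [hy.1], hy.2⟩ (fun h => by rw [← h] at hy; linarith [hy.1])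
      · apply ContinuousOn.intervalIntegrable
        rw [Set.uIcc_of_le (by linarith)]
        exact cont_div cont_sqrt1 (fun y hy => fun h => by rw [← h] at hy; linarith [hy.1])
    have hFm1 : F (-1) = -(Real.pi / 2) * x := by
      simp only [hF, hH]
      norm_num [Real.arcsin_neg_one]
      ring_nf
    have hF1 : F 1 = Real.pi / 2 * x := by
      simp only [hF, hH]
      have : Real.log (x - 1) = Real.log (1 - x) := by
        rw [show x - 1 = -(1 - x) by ring, Real.log_neg_eq_log]
      norm_num [Real.arcsin_one, this]
      ring_nf
    have hFxm : F (x - ε) = H (x - ε) - s * Real.log ε := by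
      simp only [hF]; norm_num
    have hFxp : F (x + ε) = H (x + ε) - s * Real.log ε := by
      simp only [hF]
      rw [show x - (x + ε) = -ε by ring, Real.log_neg_eq_log]
    rw [eq1, eq2, hFm1, hF1, hFxm, hFxp]
    ring
  have hHcont : ContinuousAt H x := by
    apply ContinuousAt.add
    · exact ((continuous_const.mul Real.continuous_arcsin).sub cont_sqrt1).continuousAt
    · apply ContinuousAt.mul continuousAt_const
      apply ContinuousAt.log
      · exact ((continuous_const.sub (continuous_const.mul continuous_id)).add
          (continuous_const.mul cont_sqrt1)).continuousAt
      · exact ne_of_gt (N_pos hx1 hx2 hx1.le hx2.le)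
  have ht1 : Tendsto (fun ε : ℝ => x - ε) (nhdsWithin 0 (Set.Ioi 0)) (nhds x) := by
    have : Tendsto (fun ε : ℝ => x - ε) (nhds 0) (nhds (x - 0)) :=
      (continuous_const.sub continuous_id).tendsto 0
    simpa using this.mono_left nhdsWithin_le_nhds
  have ht2 : Tendsto (fun ε : ℝ => x + ε) (nhdsWithin 0 (Set.Ioi 0)) (nhds x) := by
    have : Tendsto (fun ε : ℝ => x + ε) (nhds 0) (nhds (x + 0)) :=
      (continuous_const.add continuous_id).tendsto 0
    simpa using this.mono_left nhdsWithin_le_nhds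
  have hlim : Tendsto (fun ε : ℝ => Real.pi * x + (H (x - ε) - H (x + ε)))
      (nhdsWithin 0 (Set.Ioi 0)) (nhds (Real.pi * x)) := by
    have : Tendsto (fun ε : ℝ => Real.pi * x + (H (x - ε) - H (x + ε)))
        (nhdsWithin 0 (Set.Ioi 0)) (nhds (Real.pi * x + (H x - H x))) :=
      tendsto_const_nhds.add ((hHcont.tendsto.comp ht1).sub (hHcont.tendsto.comp ht2))
    simpa using this
  exact Filter.Tendsto.congr' (hev.mono fun ε h => h.symm) hlim

lemma cont_sqrt1' : Continuous (fun y : ℝ => Real.sqrt (1 - y ^ 2)) :=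
  Real.continuous_sqrt.comp (by continuity)

lemma red (n : ℤ) : (∫ y in (-1:ℝ)..1, (Chebyshev.U ℝ n).eval y * Real.sqrt (1 - y ^ 2))
    = ∫ θ in (0:ℝ)..Real.pi, Real.sin (((n : ℝ) + 1) * θ) * Real.sin θ := by
  have hg : Continuous (fun y : ℝ => (Chebyshev.U ℝ n).eval y * Real.sqrt (1 - y ^ 2)) :=
    (Polynomial.continuous _).mul cont_sqrt1'
  have hsub := intervalIntegral.integral_comp_smul_deriv (a := 0) (b := Real.pi)
    (f := Real.cos) (f' := fun θ => -Real.sin θ)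
    (g := fun y => (Chebyshev.U ℝ n).eval y * Real.sqrt (1 - y ^ 2))
    (fun θ _ => Real.hasDerivAt_cos θ) (Real.continuous_sin.neg.continuousOn) hg
  rw [Real.cos_zero, Real.cos_pi] at hsub
  have flip : (∫ y in (1:ℝ)..(-1), (Chebyshev.U ℝ n).eval y * Real.sqrt (1 - y ^ 2))
      = -∫ y in (-1:ℝ)..1, (Chebyshev.U ℝ n).eval y * Real.sqrt (1 - y ^ 2) :=
    intervalIntegral.integral_symm _ _
  rw [flip] at hsub
  have congrI : (∫ θ in (0:ℝ)..Real.pi, (fun θ => -Real.sin θ) θ •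
      ((fun y => (Chebyshev.U ℝ n).eval y * Real.sqrt (1 - y ^ 2)) ∘ Real.cos) θ)
      = ∫ θ in (0:ℝ)..Real.pi, -(Real.sin (((n:ℝ) + 1) * θ) * Real.sin θ) := by
    apply intervalIntegral.integral_congr
    intro θ hθ
    rw [Set.uIcc_of_le Real.pi_pos.le] at hθ
    have hsin : 0 ≤ Real.sin θ := Real.sin_nonneg_of_nonneg_of_le_pi hθ.1 hθ.2
    have hsq : Real.sqrt (1 - Real.cos θ ^ 2) = Real.sin θ := by
      rw [show (1 : ℝ) - Real.cos θ ^ 2 = Real.sin θ ^ 2 by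
        have := Real.sin_sq_add_cos_sq θ; linarith]
      exact Real.sqrt_sq hsin
    simp only [Function.comp_apply, smul_eq_mul, hsq]
    rw [← Polynomial.Chebyshev.U_real_cos θ n]
    ring
  rw [congrI] at hsub
  rw [intervalIntegral.integral_neg] at hsub
  linarith [hsub]

lemma moment0 : (∫ y in (-1:ℝ)..1, (Chebyshev.U ℝ 0).eval y * Real.sqrt (1 - y ^ 2))
    = Real.pi / 2 := by
  rw [red 0]
  have congrI : (∫ θ in (0:ℝ)..Real.pi, Real.sin ((((0:ℤ) : ℝ) + 1) * θ) * Real.sin θ)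
      = ∫ θ in (0:ℝ)..Real.pi, Real.sin θ ^ 2 := by
    apply intervalIntegral.integral_congr
    intro θ _
    norm_num [sq]
  rw [congrI, integral_sin_sq]
  simp [Real.sin_pi]

lemma momentpos (n : ℕ) (hn : 1 ≤ n) :
    (∫ y in (-1:ℝ)..1, (Chebyshev.U ℝ (n : ℤ)).eval y * Real.sqrt (1 - y ^ 2)) = 0 := by
  rw [red n]
  push_cast
  have hne1 : (n : ℝ) ≠ 0 := Nat.cast_ne_zero.mpr (by omega)
  have hne2 : (n : ℝ) + 2 ≠ 0 := by positivity
  have hderiv : ∀ θ ∈ Set.uIcc (0:ℝ) Real.pi,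
      HasDerivAt (fun θ => Real.sin ((n:ℝ) * θ) / (2 * n) - Real.sin (((n:ℝ) + 2) * θ) / (2 * ((n:ℝ) + 2)))
        (Real.sin (((n:ℝ) + 1) * θ) * Real.sin θ) θ := by
    intro θ _
    have h1 : HasDerivAt (fun θ : ℝ => Real.sin ((n:ℝ) * θ)) (Real.cos ((n:ℝ) * θ) * (n:ℝ)) θ := by
      simpa using ((hasDerivAt_id θ).const_mul (n:ℝ)).sin
    have h2 : HasDerivAt (fun θ : ℝ => Real.sin (((n:ℝ) + 2) * θ))
        (Real.cos (((n:ℝ) + 2) * θ) * ((n:ℝ) + 2)) θ := by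
      simpa using ((hasDerivAt_id θ).const_mul ((n:ℝ) + 2)).sin
    have := (h1.div_const (2 * (n:ℝ))).sub (h2.div_const (2 * ((n:ℝ) + 2)))
    refine this.congr_deriv ?_
    rw [show ((n:ℝ)) * θ = ((n:ℝ) + 1) * θ - θ by ring,
      show ((n:ℝ) + 2) * θ = ((n:ℝ) + 1) * θ + θ by ring, Real.cos_sub, Real.cos_add]
    field_simp
    ring
  rw [intervalIntegral.integral_eq_sub_of_hasDerivAt hderiv
    (by apply Continuous.intervalIntegrable; continuity)]
  have e1 : Real.sin ((n:ℝ) * Real.pi) = 0 := Real.sin_nat_mul_pi n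
  have e2 : Real.sin (((n:ℝ) + 2) * Real.pi) = 0 := by
    have : ((n:ℝ) + 2) = ((n + 2 : ℕ) : ℝ) := by push_cast; ring
    rw [this]; exact Real.sin_nat_mul_pi (n + 2)
  simp [e1, e2]

lemma J_tendsto {x : ℝ} {g : ℝ → ℝ} (hg : Continuous g) :
    Tendsto (fun ε : ℝ => (∫ y in (-1:ℝ)..(x - ε), g y) + ∫ y in (x + ε)..(1:ℝ), g y)
      (nhdsWithin 0 (Set.Ioi 0)) (nhds (∫ y in (-1:ℝ)..1, g y)) := by
  have hint : ∀ a b : ℝ, IntervalIntegrable g MeasureTheory.volume a b :=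
    fun a b => hg.intervalIntegrable a b
  have hP : Continuous (fun t => ∫ y in (-1:ℝ)..t, g y) :=
    intervalIntegral.continuous_primitive hint (-1)
  have heq : ∀ ε : ℝ, (∫ y in (x + ε)..(1:ℝ), g y)
      = (∫ y in (-1:ℝ)..1, g y) - ∫ y in (-1:ℝ)..(x + ε), g y := by
    intro ε
    rw [eq_sub_iff_add_eq, add_comm]
    exact intervalIntegral.integral_add_adjacent_intervals (hint _ _) (hint _ _)
  simp only [heq]
  have ht1 : Tendsto (fun ε : ℝ => x - ε) (nhdsWithin 0 (Set.Ioi 0)) (nhds x) := by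
    have : Tendsto (fun ε : ℝ => x - ε) (nhds 0) (nhds (x - 0)) :=
      (continuous_const.sub continuous_id).tendsto 0
    simpa using this.mono_left nhdsWithin_le_nhds
  have ht2 : Tendsto (fun ε : ℝ => x + ε) (nhdsWithin 0 (Set.Ioi 0)) (nhds x) := by
    have : Tendsto (fun ε : ℝ => x + ε) (nhds 0) (nhds (x + 0)) :=
      (continuous_const.add continuous_id).tendsto 0
    simpa using this.mono_left nhdsWithin_le_nhds
  have hfin : Tendsto (fun ε : ℝ => (∫ y in (-1:ℝ)..(x - ε), g y) +
      ((∫ y in (-1:ℝ)..1, g y) - ∫ y in (-1:ℝ)..(x + ε), g y)) (nhdsWithin 0 (Set.Ioi 0))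
      (nhds ((∫ y in (-1:ℝ)..x, g y) + ((∫ y in (-1:ℝ)..1, g y) - ∫ y in (-1:ℝ)..x, g y))) :=
    Tendsto.add ((hP.tendsto x).comp ht1) (Tendsto.sub tendsto_const_nhds ((hP.tendsto x).comp ht2))
  simpa using hfin

lemma x_notmem_left {x ε : ℝ} (hx1 : -1 < x) (hε : 0 < ε) : x ∉ Set.uIcc (-1:ℝ) (x - ε) := by
  rw [Set.mem_uIcc]
  push_neg
  constructor <;> intro h <;> [linarith; linarith]

lemma x_notmem_right {x ε : ℝ} (hx2 : x < 1) (hε : 0 < ε) : x ∉ Set.uIcc (x + ε) (1:ℝ) := by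
  rw [Set.mem_uIcc]
  push_neg
  constructor <;> intro h <;> [linarith; linarith]

lemma step_eq {x : ℝ} (n : ℤ) {a b : ℝ} (hx : x ∉ Set.uIcc a b) :
    (∫ y in a..b, (Chebyshev.U ℝ (n + 2)).eval y * Real.sqrt (1 - y ^ 2) / (x - y))
    = 2 * x * (∫ y in a..b, (Chebyshev.U ℝ (n + 1)).eval y * Real.sqrt (1 - y ^ 2) / (x - y))
      - 2 * (∫ y in a..b, (Chebyshev.U ℝ (n + 1)).eval y * Real.sqrt (1 - y ^ 2))
      - ∫ y in a..b, (Chebyshev.U ℝ n).eval y * Real.sqrt (1 - y ^ 2) / (x - y) := by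
  have hne : ∀ y ∈ Set.uIcc a b, x ≠ y := fun y hy h => hx (h ▸ hy)
  have hcd : ∀ m : ℤ, IntervalIntegrable
      (fun y => (Chebyshev.U ℝ m).eval y * Real.sqrt (1 - y ^ 2) / (x - y))
      MeasureTheory.volume a b := by
    intro m
    exact (cont_div ((Polynomial.continuous _).mul cont_sqrt1) hne).intervalIntegrable
  have hcB : IntervalIntegrable (fun y => (Chebyshev.U ℝ (n + 1)).eval y * Real.sqrt (1 - y ^ 2))
      MeasureTheory.volume a b :=
    ((Polynomial.continuous _).mul cont_sqrt1).intervalIntegrable a b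
  have congrI : (∫ y in a..b, (Chebyshev.U ℝ (n + 2)).eval y * Real.sqrt (1 - y ^ 2) / (x - y))
      = ∫ y in a..b, (2 * x * ((Chebyshev.U ℝ (n + 1)).eval y * Real.sqrt (1 - y ^ 2) / (x - y))
          - 2 * ((Chebyshev.U ℝ (n + 1)).eval y * Real.sqrt (1 - y ^ 2))
          - (Chebyshev.U ℝ n).eval y * Real.sqrt (1 - y ^ 2) / (x - y)) := by
    apply intervalIntegral.integral_congr
    intro y hy
    have hxy : x - y ≠ 0 := sub_ne_zero.mpr (hne y hy)
    have hrec : (Chebyshev.U ℝ (n + 2)).eval y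
        = 2 * y * (Chebyshev.U ℝ (n + 1)).eval y - (Chebyshev.U ℝ n).eval y := by
      have := congr_arg (Polynomial.eval y) (Chebyshev.U_add_two ℝ n)
      simpa using this
    simp only [hrec]
    field_simp
    ring
  rw [congrI, intervalIntegral.integral_sub (((hcd (n+1)).const_mul (2*x)).sub (hcB.const_mul 2))
    (hcd n), intervalIntegral.integral_sub ((hcd (n+1)).const_mul (2*x)) (hcB.const_mul 2),
    intervalIntegral.integral_const_mul, intervalIntegral.integral_const_mul]


def Pprop (x : ℝ) (n : ℕ) : Prop :=
  Tendsto (fun ε : ℝ =>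
    (∫ y in (-1:ℝ)..(x - ε), (Chebyshev.U ℝ (n : ℤ)).eval y * Real.sqrt (1 - y ^ 2) / (x - y)) +
    ∫ y in (x + ε)..(1:ℝ), (Chebyshev.U ℝ (n : ℤ)).eval y * Real.sqrt (1 - y ^ 2) / (x - y))
    (nhdsWithin 0 (Set.Ioi 0)) (nhds (Real.pi * (Chebyshev.T ℝ ((n : ℤ) + 1)).eval x))

lemma P_zero {x : ℝ} (hx1 : -1 < x) (hx2 : x < 1) : Pprop x 0 := by
  unfold Pprop
  have := base_tendsto hx1 hx2
  simp only [Nat.cast_zero, Chebyshev.U_zero, Polynomial.eval_one, one_mul, zero_add,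
    Chebyshev.T_one, Polynomial.eval_X]
  exact this

lemma step_eq1 {x : ℝ} {a b : ℝ} (hx : x ∉ Set.uIcc a b) :
    (∫ y in a..b, (Chebyshev.U ℝ 1).eval y * Real.sqrt (1 - y ^ 2) / (x - y))
    = 2 * x * (∫ y in a..b, Real.sqrt (1 - y ^ 2) / (x - y))
      - 2 * ∫ y in a..b, Real.sqrt (1 - y ^ 2) := by
  have hne : ∀ y ∈ Set.uIcc a b, x ≠ y := fun y hy h => hx (h ▸ hy)
  have hcd : IntervalIntegrable (fun y => Real.sqrt (1 - y ^ 2) / (x - y))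
      MeasureTheory.volume a b := (cont_div cont_sqrt1 hne).intervalIntegrable
  have hcB : IntervalIntegrable (fun y => Real.sqrt (1 - y ^ 2)) MeasureTheory.volume a b :=
    cont_sqrt1.intervalIntegrable a b
  have congrI : (∫ y in a..b, (Chebyshev.U ℝ 1).eval y * Real.sqrt (1 - y ^ 2) / (x - y))
      = ∫ y in a..b, (2 * x * (Real.sqrt (1 - y ^ 2) / (x - y)) - 2 * Real.sqrt (1 - y ^ 2)) := by
    apply intervalIntegral.integral_congr
    intro y hy
    have hxy : x - y ≠ 0 := sub_ne_zero.mpr (hne y hy)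
    simp only [Chebyshev.U_one, Polynomial.eval_mul, Polynomial.eval_ofNat, Polynomial.eval_X]
    field_simp
    ring
  rw [congrI, intervalIntegral.integral_sub (hcd.const_mul (2*x)) (hcB.const_mul 2),
    intervalIntegral.integral_const_mul, intervalIntegral.integral_const_mul]

lemma P_one {x : ℝ} (hx1 : -1 < x) (hx2 : x < 1) : Pprop x 1 := by
  unfold Pprop
  have hbase := base_tendsto hx1 hx2
  have hsqint : (∫ y in (-1:ℝ)..1, Real.sqrt (1 - y ^ 2)) = Real.pi / 2 := by
    have := moment0
    simpa [Chebyshev.U_zero] using this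
  have hJt := J_tendsto (x := x) (g := fun y => Real.sqrt (1 - y ^ 2)) cont_sqrt1
  rw [hsqint] at hJt
  have hcomb : Tendsto (fun ε : ℝ =>
      2 * x * ((∫ y in (-1:ℝ)..(x - ε), Real.sqrt (1 - y ^ 2) / (x - y)) +
        ∫ y in (x + ε)..(1:ℝ), Real.sqrt (1 - y ^ 2) / (x - y))
      - 2 * ((∫ y in (-1:ℝ)..(x - ε), Real.sqrt (1 - y ^ 2)) +
        ∫ y in (x + ε)..(1:ℝ), Real.sqrt (1 - y ^ 2)))
      (nhdsWithin 0 (Set.Ioi 0))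
      (nhds (2 * x * (Real.pi * x) - 2 * (Real.pi / 2))) :=
    (hbase.const_mul (2*x)).sub (hJt.const_mul 2)
  have hval : 2 * x * (Real.pi * x) - 2 * (Real.pi / 2)
      = Real.pi * (Chebyshev.T ℝ (((1:ℕ) : ℤ) + 1)).eval x := by
    norm_num [Chebyshev.T_two]
    ring
  rw [hval] at hcomb
  apply Filter.Tendsto.congr' _ hcomb
  filter_upwards [self_mem_nhdsWithin] with ε hε
  have hεpos : (0:ℝ) < ε := hε
  have e1 : ((1:ℕ) : ℤ) = (1 : ℤ) := by norm_num
  rw [e1, step_eq1 (x_notmem_left hx1 hεpos), step_eq1 (x_notmem_right hx2 hεpos)]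
  ring

lemma P_step {x : ℝ} (hx1 : -1 < x) (hx2 : x < 1) (n : ℕ)
    (h1 : Pprop x n) (h2 : Pprop x (n + 1)) : Pprop x (n + 2) := by
  unfold Pprop at h1 h2 ⊢
  have hJ : (∫ y in (-1:ℝ)..1, (Chebyshev.U ℝ ((n:ℤ) + 1)).eval y * Real.sqrt (1 - y ^ 2)) = 0 := by
    have := momentpos (n + 1) (by omega)
    rw [show (((n+1:ℕ)):ℤ) = (n:ℤ) + 1 by push_cast; ring] at this
    exact this
  have hJt := J_tendsto (x := x)
    (g := fun y => (Chebyshev.U ℝ ((n:ℤ) + 1)).eval y * Real.sqrt (1 - y ^ 2))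
    ((Polynomial.continuous _).mul cont_sqrt1)
  rw [hJ] at hJt
  rw [show (((n+1:ℕ)):ℤ) = (n:ℤ) + 1 by push_cast; ring] at h2
  have hcomb : Tendsto (fun ε : ℝ =>
      2 * x * ((∫ y in (-1:ℝ)..(x - ε), (Chebyshev.U ℝ ((n:ℤ) + 1)).eval y * Real.sqrt (1 - y ^ 2) / (x - y)) +
        ∫ y in (x + ε)..(1:ℝ), (Chebyshev.U ℝ ((n:ℤ) + 1)).eval y * Real.sqrt (1 - y ^ 2) / (x - y))
      - 2 * ((∫ y in (-1:ℝ)..(x - ε), (Chebyshev.U ℝ ((n:ℤ) + 1)).eval y * Real.sqrt (1 - y ^ 2)) +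
        ∫ y in (x + ε)..(1:ℝ), (Chebyshev.U ℝ ((n:ℤ) + 1)).eval y * Real.sqrt (1 - y ^ 2))
      - ((∫ y in (-1:ℝ)..(x - ε), (Chebyshev.U ℝ (n:ℤ)).eval y * Real.sqrt (1 - y ^ 2) / (x - y)) +
        ∫ y in (x + ε)..(1:ℝ), (Chebyshev.U ℝ (n:ℤ)).eval y * Real.sqrt (1 - y ^ 2) / (x - y)))
      (nhdsWithin 0 (Set.Ioi 0))
      (nhds (2 * x * (Real.pi * (Chebyshev.T ℝ ((n:ℤ) + 1 + 1)).eval x) - 2 * 0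
        - Real.pi * (Chebyshev.T ℝ ((n:ℤ) + 1)).eval x)) :=
    ((h2.const_mul (2*x)).sub (hJt.const_mul 2)).sub h1
  have hval : 2 * x * (Real.pi * (Chebyshev.T ℝ ((n:ℤ) + 1 + 1)).eval x) - 2 * 0
      - Real.pi * (Chebyshev.T ℝ ((n:ℤ) + 1)).eval x
      = Real.pi * (Chebyshev.T ℝ ((((n+2:ℕ)):ℤ) + 1)).eval x := by
    have h := congr_arg (Polynomial.eval x) (Chebyshev.T_add_two ℝ ((n:ℤ) + 1))
    simp only [Polynomial.eval_sub, Polynomial.eval_mul, Polynomial.eval_ofNat,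
      Polynomial.eval_X] at h
    rw [show ((((n+2:ℕ)):ℤ) + 1) = (n:ℤ) + 1 + 2 by push_cast; ring, h]
    ring
  rw [hval] at hcomb
  apply Filter.Tendsto.congr' _ hcomb
  filter_upwards [self_mem_nhdsWithin] with ε hε
  have hεpos : (0:ℝ) < ε := hε
  rw [show ((((n+2:ℕ)):ℤ)) = (n:ℤ) + 2 by push_cast; ring,
    step_eq (n:ℤ) (x_notmem_left hx1 hεpos), step_eq (n:ℤ) (x_notmem_right hx2 hεpos)]
  ring

lemma I_tendsto {x : ℝ} (hx1 : -1 < x) (hx2 : x < 1) : ∀ n : ℕ, Pprop x n := by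
  have pair : ∀ n : ℕ, Pprop x n ∧ Pprop x (n + 1) := by
    intro n
    induction n with
    | zero => exact ⟨P_zero hx1 hx2, P_one hx1 hx2⟩
    | succ m ih => exact ⟨ih.2, P_step hx1 hx2 m ih.1 ih.2⟩
  exact fun n => (pair n).1

/-- For `k ≥ 1` and `x ∈ (-1,1)`, the Cauchy principal value
`(1/π) P.V. ∫_{-1}^1 T_k'(y) √(1-y²) / (x - y) dy = k · T_k(x)`,
formalized via symmetric truncation of the singularity at `y = x`. -/
theorem chebyshev_hilbert_transform (k : ℕ) (hk : 1 ≤ k) (x : ℝ)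
    (hx : x ∈ Set.Ioo (-1 : ℝ) 1) :
    Tendsto (fun ε : ℝ =>
        (1 / Real.pi) *
          ((∫ y in (-1 : ℝ)..(x - ε),
              (derivative (Chebyshev.T ℝ k)).eval y * Real.sqrt (1 - y ^ 2) / (x - y)) +
            ∫ y in (x + ε)..(1 : ℝ),
              (derivative (Chebyshev.T ℝ k)).eval y * Real.sqrt (1 - y ^ 2) / (x - y)))
      (nhdsWithin 0 (Set.Ioi 0))
      (nhds ((k : ℝ) * (Chebyshev.T ℝ k).eval x)) := by
  obtain ⟨hx1, hx2⟩ := hx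
  have hP := I_tendsto hx1 hx2 (k - 1)
  unfold Pprop at hP
  rw [show (((k-1:ℕ)):ℤ) + 1 = (k:ℤ) by omega] at hP
  have hfin := (hP.const_mul ((k:ℝ))).const_mul (1 / Real.pi)
  have hval : 1 / Real.pi * ((k:ℝ) * (Real.pi * (Chebyshev.T ℝ (k:ℤ)).eval x))
      = (k : ℝ) * (Chebyshev.T ℝ (k:ℤ)).eval x := by
    field_simp
  rw [hval] at hfin
  apply Filter.Tendsto.congr' _ hfin
  filter_upwards with ε
  have hptw : ∀ y : ℝ, (derivative (Chebyshev.T ℝ (k:ℤ))).eval y * Real.sqrt (1 - y ^ 2) / (x - y)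
      = (k:ℝ) * ((Chebyshev.U ℝ (((k-1:ℕ)):ℤ)).eval y * Real.sqrt (1 - y ^ 2) / (x - y)) := by
    intro y
    rw [Chebyshev.T_derivative_eq_U, show ((k:ℤ) - 1) = (((k-1:ℕ)):ℤ) by omega]
    simp only [Polynomial.eval_mul, Polynomial.eval_intCast, Polynomial.eval_natCast, Int.cast_natCast]
    ring
  have hI : ∀ a b : ℝ, (∫ y in a..b,
      (derivative (Chebyshev.T ℝ (k:ℤ))).eval y * Real.sqrt (1 - y ^ 2) / (x - y))
      = (k:ℝ) * ∫ y in a..b, (Chebyshev.U ℝ (((k-1:ℕ)):ℤ)).eval y * Real.sqrt (1 - y ^ 2) / (x - y) := by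
    intro a b
    rw [← intervalIntegral.integral_const_mul]
    exact intervalIntegral.integral_congr (fun y _ => hptw y)
  simp only [hI]
  ring
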